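/- Let a and b be integers greater than 1, and consider the additive group ℤ with generating sets A = {a^i : i ≥ 0} and B = {b^j : j ≥ 0}, with associated metrics d_A and d_B. If the metrics d_A and d_B are bi-Lipschitz equivalent, then there exist positive integers m and n such that a^m = b^n. -/

import Mathlib

/-- The word length of the integer `x` with respect to the generating set
`{a^i : i ≥ 0}` of the additive group ℤ: the least `k` such that `x` is a sum of
`k` terms, each of the form `a^i` or `-a^i` with `i` a nonnegative integer. -/
noncomputable def geomLength (a : ℤ) (x : ℤ) : ℕ :=
  sInf {n : ℕ | ∃ l : List ℤ, l.length = n ∧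
    (∀ z ∈ l, ∃ i : ℕ, z = a ^ i ∨ z = -a ^ i) ∧ l.sum = x}

/-- The (real-valued) metric on ℤ associated to the generating set `{a^i : i ≥ 0}`:
`d_A(x,y) = ℓ_A(x - y)`. -/
noncomputable def geomDist (a : ℤ) (x y : ℤ) : ℝ :=
  (geomLength a (x - y) : ℝ)


/-- `x` is a sum of at most `k` signed powers of `a`. -/
def HasRep (a x : ℤ) (k : ℕ) : Prop :=
  ∃ l : List ℤ, l.length ≤ k ∧ (∀ z ∈ l, ∃ i : ℕ, z = a ^ i ∨ z = -a ^ i) ∧ l.sum = x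

lemma rep_of_int (a t : ℤ) :
    ∃ l : List ℤ, l.length = t.natAbs ∧ (∀ z ∈ l, ∃ i : ℕ, z = a ^ i ∨ z = -a ^ i) ∧
      l.sum = t := by
  refine ⟨List.replicate t.natAbs (if 0 ≤ t then 1 else -1), by simp, ?_, ?_⟩
  · intro z hz
    rw [List.mem_replicate] at hz
    refine ⟨0, ?_⟩
    rw [hz.2, pow_zero]
    split <;> simp
  · rw [List.sum_replicate, nsmul_eq_mul]
    split <;> omega

lemma split_rep (a : ℤ) (l : List ℤ)
    (hl : ∀ z ∈ l, ∃ i : ℕ, z = a ^ i ∨ z = -a ^ i) :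
    ∃ (u : ℤ) (l' : List ℤ), (∀ z ∈ l', ∃ i : ℕ, z = a ^ i ∨ z = -a ^ i) ∧
      u.natAbs + l'.length ≤ l.length ∧ l.sum = u + a * l'.sum := by
  induction l with
  | nil => exact ⟨0, [], by simp, by simp, by simp⟩
  | cons z t ih =>
    obtain ⟨u, l', hl', hlen, hsum⟩ := ih (fun w hw => hl w (List.mem_cons_of_mem _ hw))
    obtain ⟨i, hi⟩ := hl z List.mem_cons_self
    match i with
    | 0 =>
      refine ⟨u + z, l', hl', ?_, ?_⟩
      · have : z.natAbs = 1 := by rcases hi with h | h <;> simp [h]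
        have := Int.natAbs_add_le u z
        simp only [List.length_cons]
        omega
      · simp only [List.sum_cons, hsum]; ring
    | (i + 1) =>
      obtain ⟨w, hw_entry, hzw⟩ : ∃ w, (w = a ^ i ∨ w = -a ^ i) ∧ z = a * w := by
        rcases hi with h | h
        · exact ⟨a ^ i, Or.inl rfl, by rw [h, pow_succ]; ring⟩
        · exact ⟨-a ^ i, Or.inr rfl, by rw [h, pow_succ]; ring⟩
      refine ⟨u, w :: l', ?_, by simp only [List.length_cons]; omega, ?_⟩
      · intro v hv
        rcases List.mem_cons.1 hv with h | h
        · exact ⟨i, h ▸ hw_entry⟩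
        · exact hl' v h
      · simp only [List.sum_cons, hsum, hzw]; ring
lemma rep_div (a : ℤ) (ha : 2 ≤ a) {x : ℤ} {k : ℕ} (h : HasRep a x k) (hdvd : a ∣ x) :
    ∃ y, x = a * y ∧ HasRep a y k := by
  obtain ⟨l, hlen, hentries, hsum⟩ := h
  obtain ⟨u, l', hl', hlen', hsum'⟩ := split_rep a l hentries
  have hau : a ∣ u := by
    have h1 : a ∣ u + a * l'.sum := by rw [← hsum', hsum]; exact hdvd
    simpa using h1.sub (dvd_mul_right a l'.sum)
  obtain ⟨v, hv⟩ := hau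
  obtain ⟨lv, hlv_len, hlv_ent, hlv_sum⟩ := rep_of_int a v
  refine ⟨v + l'.sum, by rw [← hsum, hsum', hv]; ring, lv ++ l', ?_, ?_, ?_⟩
  · rw [List.length_append, hlv_len]
    have hva : v.natAbs ≤ u.natAbs := by
      rw [hv, Int.natAbs_mul]
      exact Nat.le_mul_of_pos_left _ (by omega)
    omega
  · intro z hz
    rcases List.mem_append.1 hz with h | h
    · exact hlv_ent z h
    · exact hl' z h
  · rw [List.sum_append, hlv_sum]

lemma rep_extract (a : ℤ) (ha : 2 ≤ a) :
    ∀ (n : ℕ) (x : ℤ), x.natAbs ≤ n → x ≠ 0 → ∀ k, HasRep a x k →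
      ∃ (e : ℕ) (w : ℤ), x = a ^ e * w ∧ ¬ a ∣ w ∧ HasRep a w k := by
  intro n
  induction n with
  | zero => intro x hxn hx k _; exact absurd (by omega : x = 0) hx
  | succ n ih =>
    intro x hxn hx k h
    by_cases hdvd : a ∣ x
    · obtain ⟨y, hxy, hy⟩ := rep_div a ha h hdvd
      have hy0 : y ≠ 0 := by rintro rfl; simp at hxy; exact hx hxy
      have hyn : y.natAbs ≤ n := by
        have h1 : x.natAbs = a.natAbs * y.natAbs := by rw [hxy, Int.natAbs_mul]
        have h2 : 2 ≤ a.natAbs := by omega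
        have h3 : 1 ≤ y.natAbs := by omega
        nlinarith
      obtain ⟨e, w, hw, hnd, hrep⟩ := ih y hyn hy0 k hy
      exact ⟨e + 1, w, by rw [hxy, hw, pow_succ]; ring, hnd, hrep⟩
    · exact ⟨0, x, by simp, hdvd, h⟩
lemma padic_mono (p : ℕ) [Fact p.Prime] {x y : ℕ} (hy : y ≠ 0) (h : x ∣ y) :
    padicValNat p x ≤ padicValNat p y :=
  (padicValNat_dvd_iff_le hy).mp (pow_padicValNat_dvd.trans h)

lemma val_bound (p : ℕ) (hp : p.Prime) (c : ℕ) (hc : 2 ≤ c) (hpc : ¬ p ∣ c) :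
    ∃ E : ℕ, ∀ d : ℕ, 1 ≤ d → padicValNat p (c ^ d - 1) ≤ E + padicValNat p d := by
  haveI : Fact p.Prime := ⟨hp⟩
  rcases hp.eq_two_or_odd' with rfl | hodd
  · refine ⟨padicValNat 2 (c + 1) + padicValNat 2 (c - 1), fun d hd => ?_⟩
    have hne : c ^ (2 * d) - 1 ≠ 0 := by
      have : 1 < c ^ (2 * d) := Nat.one_lt_pow (by omega) (by omega)
      omega
    have hmono : padicValNat 2 (c ^ d - 1) ≤ padicValNat 2 (c ^ (2 * d) - 1) := by
      refine padic_mono 2 hne ?_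
      have := Nat.sub_dvd_pow_sub_pow (c ^ d) 1 2
      simpa [← pow_mul, one_pow, mul_comm] using this
    have key := padicValNat.pow_two_sub_pow (x := c) (y := 1) (by omega) (by omega)
      hpc (n := 2 * d) (by omega) ⟨d, by ring⟩
    have h2d : padicValNat 2 (2 * d) = 1 + padicValNat 2 d := by
      rw [padicValNat.mul (by omega) (by omega), padicValNat.self (by omega)]
    simp only [one_pow, h2d] at key
    omega
  · refine ⟨padicValNat p (c ^ (p - 1) - 1), fun d hd => ?_⟩
    have hp1 : 1 < p := hp.one_lt
    have hple : 2 ≤ p - 1 := by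
      have h2 : p ≠ 2 := by rintro rfl; simp [Nat.odd_iff] at hodd
      have := hp.two_le
      omega
    have hcp : 1 < c ^ (p - 1) := Nat.one_lt_pow (by omega) (by omega)
    have hferm : p ∣ c ^ (p - 1) - 1 := by
      have hc0 : (c : ZMod p) ≠ 0 := by
        rw [Ne, ZMod.natCast_eq_zero_iff]
        exact hpc
      have h1 : ((c ^ (p - 1) : ℕ) : ZMod p) = ((1 : ℕ) : ZMod p) := by
        push_cast
        exact ZMod.pow_card_sub_one_eq_one hc0
      have := (ZMod.natCast_eq_natCast_iff _ _ _).mp h1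
      exact (Nat.modEq_iff_dvd' (by omega)).mp this.symm
    have hnd : ¬ p ∣ c ^ (p - 1) := fun h => hpc (hp.dvd_of_dvd_pow h)
    have key := padicValNat.pow_sub_pow (x := c ^ (p - 1)) (y := 1) hodd hcp
      (by simpa using hferm) hnd (n := d) (by omega)
    have hne : (c ^ (p - 1)) ^ d - 1 ≠ 0 := by
      have : 1 < (c ^ (p - 1)) ^ d := Nat.one_lt_pow (by omega) hcp
      omega
    have hmono : padicValNat p (c ^ d - 1) ≤ padicValNat p ((c ^ (p - 1)) ^ d - 1) := by
      refine padic_mono p hne ?_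
      have := Nat.sub_dvd_pow_sub_pow (c ^ d) 1 (p - 1)
      simpa [← pow_mul, one_pow, mul_comm] using this
    simp only [one_pow] at key
    omega
lemma sum_getD {M : Type*} [AddCommMonoid M] (l : List M) :
    ∀ K, l.length ≤ K → ∑ i : Fin K, l.getD i 0 = l.sum := by
  induction l with
  | nil => intro K _; simp
  | cons z t ih =>
    intro K hK
    match K with
    | (k + 1) =>
      rw [Fin.sum_univ_succ]
      simp only [List.sum_cons, Fin.val_zero, List.getD_cons_zero, Fin.val_succ,
        List.getD_cons_succ]
      rw [ih k (by simpa using hK)]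

lemma counting (A C K p : ℕ) (hA : 2 ≤ A) (hC : 2 ≤ C) (hp : p.Prime) (hpA : p ∣ A)
    (hpC : ¬ p ∣ C) (H : ∀ j : ℕ, HasRep (A : ℤ) ((C : ℤ) ^ j) K) : False := by
  haveI : Fact p.Prime := ⟨hp⟩
  obtain ⟨E, hE⟩ := val_bound p hp C hC hpC
  set S' : ℕ := E + K * K + K + 1 with hS'
  set S : ℕ := K + S' with hS
  set T : ℕ := 2 ^ S with hT
  set M : ℕ := p ^ T with hM
  have hp2 : 2 ≤ p := hp.two_le
  have hT1 : 1 ≤ T := Nat.one_le_two_pow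
  have hM1 : 1 < M := Nat.one_lt_pow (by omega) (by omega)
  haveI : NeZero M := ⟨by omega⟩
  set O : Finset (ZMod M) := insert 0
    (((Finset.range (T + 1)).image fun e => (A : ZMod M) ^ e) ∪
      ((Finset.range (T + 1)).image fun e => -(A : ZMod M) ^ e)) with hO
  have hOcard : O.card ≤ 2 * T + 3 := by
    refine (Finset.card_insert_le _ _).trans ?_
    have := Finset.card_union_le
      ((Finset.range (T + 1)).image fun e => (A : ZMod M) ^ e)
      ((Finset.range (T + 1)).image fun e => -(A : ZMod M) ^ e)
    have h1 := Finset.card_image_le (s := Finset.range (T + 1))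
      (f := fun e => (A : ZMod M) ^ e)
    have h2 := Finset.card_image_le (s := Finset.range (T + 1))
      (f := fun e => -(A : ZMod M) ^ e)
    simp only [Finset.card_range] at h1 h2
    omega
  have hbig : ∀ i : ℕ, T ≤ i → (A : ZMod M) ^ i = 0 := by
    intro i hi
    have hdvd : M ∣ A ^ i := by
      obtain ⟨A', rfl⟩ := hpA
      calc M = p ^ T := rfl
        _ ∣ p ^ i := pow_dvd_pow p hi
        _ ∣ (p * A') ^ i := by rw [mul_pow]; exact dvd_mul_right _ _
    have : ((A ^ i : ℕ) : ZMod M) = 0 := (ZMod.natCast_eq_zero_iff _ _).mpr hdvd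
    simpa using this
  have hterm : ∀ z : ℤ, (∃ i : ℕ, z = (A : ℤ) ^ i ∨ z = -(A : ℤ) ^ i) →
      ((z : ZMod M) ∈ O) := by
    rintro z ⟨i, hi | hi⟩ <;> subst hi <;> push_cast
    · rcases Nat.lt_or_ge i (T + 1) with h | h
      · exact Finset.mem_insert_of_mem (Finset.mem_union_left _
          (Finset.mem_image.mpr ⟨i, Finset.mem_range.mpr h, rfl⟩))
      · rw [hbig i (by omega)]
        exact Finset.mem_insert_self _ _
    · rcases Nat.lt_or_ge i (T + 1) with h | h
      · exact Finset.mem_insert_of_mem (Finset.mem_union_right _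
          (Finset.mem_image.mpr ⟨i, Finset.mem_range.mpr h, rfl⟩))
      · rw [hbig i (by omega), neg_zero]
        exact Finset.mem_insert_self _ _
  set SS : Finset (ZMod M) :=
    Finset.image (fun f : Fin K → ZMod M => ∑ i, f i)
      (Fintype.piFinset fun _ : Fin K => O) with hSS
  have hSScard : SS.card ≤ (2 * T + 3) ^ K := by
    refine (Finset.card_image_le).trans ?_
    rw [Fintype.card_piFinset]
    simp only [Finset.prod_const, Finset.card_univ, Fintype.card_fin]
    exact Nat.pow_le_pow_left hOcard K
  have hmem : ∀ x : ℤ, HasRep (A : ℤ) x K → (x : ZMod M) ∈ SS := by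
    rintro x ⟨l, hlen, hent, hsum⟩
    set lm : List (ZMod M) := l.map (fun z : ℤ => (z : ZMod M)) with hlm
    have hlm_len : lm.length = l.length := by simp [hlm]
    have hlm_sum : lm.sum = (x : ZMod M) := by
      rw [hlm, ← hsum]
      exact (map_list_sum (Int.castRingHom (ZMod M)) l).symm
    refine Finset.mem_image.mpr ⟨fun i : Fin K => lm.getD i 0, ?_, ?_⟩
    · rw [Fintype.mem_piFinset]
      intro i
      rcases Nat.lt_or_ge (i : ℕ) lm.length with h | h
      · rw [List.getD_eq_getElem _ _ h]
        have hmm : lm[(i : ℕ)] ∈ lm := List.getElem_mem _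
        obtain ⟨z, hz, hze⟩ := List.mem_map.mp hmm
        rw [← hze]
        exact hterm z (hent z hz)
      · rw [List.getD_eq_default _ _ h]
        exact Finset.mem_insert_self _ _
    · rw [sum_getD lm K (by omega), hlm_sum]
  -- pigeonhole
  have hmaps : ∀ j ∈ Finset.range (SS.card + 1), (((C : ℤ) ^ j : ℤ) : ZMod M) ∈ SS :=
    fun j _ => hmem _ (H j)
  obtain ⟨j, hj, j', hj', hne, heq⟩ :=
    Finset.exists_ne_map_eq_of_card_lt_of_maps_to
      (by rw [Finset.card_range]; omega) hmaps
  -- wlog j < j'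
  have key : ∀ u v : ℕ, u < v → v ≤ SS.card →
      (((C : ℤ) ^ u : ℤ) : ZMod M) = (((C : ℤ) ^ v : ℤ) : ZMod M) → False := by
    intro u v huv hvle heq
    set d : ℕ := v - u with hd
    have hd1 : 1 ≤ d := by omega
    have hmodeq : (C ^ u) ≡ (C ^ v) [MOD M] := by
      rw [← ZMod.natCast_eq_natCast_iff]
      push_cast
      push_cast at heq
      exact heq
    have hdvd1 : M ∣ C ^ v - C ^ u :=
      (Nat.modEq_iff_dvd' (Nat.pow_le_pow_right (by omega) (by omega))).mp hmodeq
    have hfact : C ^ v - C ^ u = C ^ u * (C ^ d - 1) := by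
      have h1 : C ^ v = C ^ u * C ^ d := by rw [← pow_add]; congr 1; omega
      rw [h1, Nat.mul_sub, mul_one]
    have hcop : Nat.Coprime M (C ^ u) := by
      rw [hM]
      exact ((hp.coprime_iff_not_dvd).mpr hpC).pow T u
    have hdvd2 : M ∣ C ^ d - 1 := by
      refine hcop.dvd_of_dvd_mul_left ?_
      rwa [← hfact]
    have hCd : 1 < C ^ d := Nat.one_lt_pow (by omega) (by omega)
    have hval : T ≤ padicValNat p (C ^ d - 1) :=
      (padicValNat_dvd_iff_le (by omega)).mp hdvd2
    have hval2 : padicValNat p (C ^ d - 1) ≤ E + padicValNat p d := hE d hd1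
    have hlog1 : padicValNat p d ≤ Nat.log 2 d :=
      (padicValNat_le_nat_log d).trans (Nat.log_anti_left (by omega) hp2)
    have hdle : d ≤ (2 * T + 3) ^ K := by
      have : d ≤ v := by omega
      omega
    have hlog2 : Nat.log 2 d ≤ (S + 2) * K := by
      have h1 : (2 * T + 3) ≤ 2 ^ (S + 2) := by
        have : 2 ≤ 2 ^ S := Nat.one_lt_two_pow (by omega)
        rw [pow_add]
        omega
      calc Nat.log 2 d ≤ Nat.log 2 ((2 * T + 3) ^ K) := Nat.log_mono_right hdle
        _ ≤ Nat.log 2 ((2 ^ (S + 2)) ^ K) :=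
            Nat.log_mono_right (Nat.pow_le_pow_left h1 K)
        _ = (S + 2) * K := by rw [← pow_mul, Nat.log_pow (by omega)]
    -- final contradiction
    have hfin1 : 2 ^ S ≤ E + (S + 2) * K := by omega
    have hfin2 : (K + 1) * (S' + 1) ≤ 2 ^ S := by
      rw [hS, pow_add]
      exact Nat.mul_le_mul (by have := Nat.lt_two_pow_self (n := K); omega)
        (by have := Nat.lt_two_pow_self (n := S'); omega)
    rw [hS] at hfin1
    nlinarith [hfin1, hfin2]
  rcases hne.lt_or_gt with h | h
  · exact key j j' h (by simp only [Finset.mem_range] at hj'; omega) heq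
  · exact key j' j h (by simp only [Finset.mem_range] at hj; omega) heq.symm
lemma main_nt (A B K : ℕ) (hA : 2 ≤ A) (hB : 2 ≤ B)
    (H : ∀ j : ℕ, HasRep (A : ℤ) ((B : ℤ) ^ j) K) :
    ∃ m n : ℕ, 0 < m ∧ 0 < n ∧ A ^ m = B ^ n := by
  have hA0 : A ≠ 0 := by omega
  have hB0 : B ≠ 0 := by omega
  -- Step A : every prime dividing A divides B
  have stepA : ∀ q : ℕ, q.Prime → q ∣ A → q ∣ B := by
    intro q hq hqA
    by_contra hqB
    exact counting A B K q hA hB hq hqA hqB H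
  -- choose the prime p0 minimizing (B.factorization p)/(A.factorization p)
  have hne : A.primeFactors.Nonempty := Nat.nonempty_primeFactors.mpr (by omega)
  obtain ⟨p0, hp0mem, hmin⟩ := A.primeFactors.exists_min_image
    (fun p => (B.factorization p : ℚ) / (A.factorization p : ℚ)) hne
  have hp0 : p0.Prime := Nat.prime_of_mem_primeFactors hp0mem
  have hp0A : p0 ∣ A := Nat.dvd_of_mem_primeFactors hp0mem
  set α : ℕ := A.factorization p0 with hα
  set β : ℕ := B.factorization p0 with hβ
  have hα1 : 1 ≤ α := (Nat.Prime.factorization_pos_of_dvd hp0 hA0 hp0A)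
  have hβ1 : 1 ≤ β := (Nat.Prime.factorization_pos_of_dvd hp0 hB0 (stepA p0 hp0 hp0A))
  -- cross inequality
  have hcross : ∀ q : ℕ, β * A.factorization q ≤ α * B.factorization q := by
    intro q
    by_cases hq : q ∈ A.primeFactors
    · have hq1 : 1 ≤ A.factorization q := by
        have := Nat.prime_of_mem_primeFactors hq
        exact Nat.Prime.factorization_pos_of_dvd this hA0 (Nat.dvd_of_mem_primeFactors hq)
      have h := hmin q hq
      rw [div_le_div_iff₀ (by positivity) (by exact_mod_cast hq1)] at h
      have h2 : β * A.factorization q ≤ B.factorization q * α := by exact_mod_cast h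
      rwa [mul_comm (B.factorization q) α] at h2
    · have : A.factorization q = 0 := by
        rwa [← Nat.support_factorization, Finsupp.notMem_support_iff] at hq
      simp [this]
  -- A^β ∣ B^α
  have hdvd : A ^ β ∣ B ^ α := by
    rw [← Nat.factorization_le_iff_dvd (pow_ne_zero β hA0) (pow_ne_zero α hB0)]
    intro q
    simp only [Nat.factorization_pow, Finsupp.coe_smul, Pi.smul_apply, smul_eq_mul]
    exact hcross q
  obtain ⟨C, hC⟩ := hdvd
  have hC0 : C ≠ 0 := by
    rintro rfl
    simp at hC
    omega
  have hp0C : ¬ p0 ∣ C := by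
    intro hdvdC
    have h1 : (B ^ α).factorization p0 = α * β := by
      simp [Nat.factorization_pow, mul_comm, hβ]
    have h2 : (B ^ α).factorization p0 = β * α + C.factorization p0 := by
      rw [hC, Nat.factorization_mul (pow_ne_zero β hA0) hC0]
      simp [Nat.factorization_pow, hα]
    have h3 : 1 ≤ C.factorization p0 := Nat.Prime.factorization_pos_of_dvd hp0 hC0 hdvdC
    have : α * β = β * α + C.factorization p0 := by rw [← h1, h2]
    nlinarith
  -- either C = 1 (done) or C ≥ 2 (contradiction via counting)
  rcases Nat.lt_or_ge C 2 with hC1 | hC2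
  · have hCeq : C = 1 := by omega
    refine ⟨β, α, by omega, by omega, ?_⟩
    rw [hCeq, mul_one] at hC
    omega
  · exfalso
    have HrepC : ∀ j : ℕ, HasRep (A : ℤ) ((C : ℤ) ^ j) K := by
      intro j
      have hx := H (α * j)
      have hx0 : ((B : ℤ)) ^ (α * j) ≠ 0 := by positivity
      obtain ⟨e, w, hxw, hnd, hrep⟩ :=
        rep_extract (A : ℤ) (by exact_mod_cast hA) (((B : ℤ)) ^ (α * j)).natAbs
          _ le_rfl hx0 K hx
      -- w is positive
      have hw_pos : 0 < w := by
        have h1 : (0 : ℤ) < (B : ℤ) ^ (α * j) := by positivity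
        have h2 : (0 : ℤ) < (A : ℤ) ^ e := by positivity
        nlinarith [hxw]
      set W : ℕ := w.toNat with hW
      have hwW : w = (W : ℤ) := by omega
      -- natural-number equation B^(α j) = A^e * W
      have hnat : B ^ (α * j) = A ^ e * W := by
        have := hxw
        rw [hwW] at this
        exact_mod_cast this
      -- e ≤ β * j
      have heA : A ^ e ∣ B ^ (α * j) := Dvd.intro W (by omega)
      have heval : α * e ≤ α * j * β := by
        have h1 := (Nat.factorization_le_iff_dvd (pow_ne_zero e hA0)
          (pow_ne_zero (α * j) hB0)).mpr heA p0
        simp only [Nat.factorization_pow, Finsupp.coe_smul, Pi.smul_apply,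
          smul_eq_mul] at h1
        calc α * e = e * α := mul_comm _ _
          _ ≤ (α * j) * β := h1
          _ = α * j * β := rfl
      have he : e ≤ β * j := by
        have : α * e ≤ α * (β * j) := by
          calc α * e ≤ α * j * β := heval
            _ = α * (β * j) := by ring
        exact Nat.le_of_mul_le_mul_left this (by omega)
      -- B^(α j) = A^(β j) * C^j
      have hBC : B ^ (α * j) = A ^ (β * j) * C ^ j := by
        calc B ^ (α * j) = (B ^ α) ^ j := by rw [← pow_mul]
          _ = (A ^ β * C) ^ j := by rw [hC]
          _ = (A ^ β) ^ j * C ^ j := by rw [mul_pow]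
          _ = A ^ (β * j) * C ^ j := by rw [← pow_mul]
      -- cancel A^e
      have hWeq : W = A ^ (β * j - e) * C ^ j := by
        have h1 : A ^ e * W = A ^ e * (A ^ (β * j - e) * C ^ j) := by
          rw [← hnat, hBC, ← mul_assoc, ← pow_add]
          congr 2
          omega
        exact Nat.eq_of_mul_eq_mul_left (by positivity) h1
      -- β j - e must be 0 since A ∤ W
      have hndW : ¬ (A : ℤ) ∣ (W : ℤ) := by rwa [← hwW]
      have he2 : β * j - e = 0 := by
        by_contra hne0
        apply hndW
        have : A ∣ W := by
          rw [hWeq]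
          exact Dvd.dvd.mul_right (dvd_pow_self A hne0) _
        exact_mod_cast this
      have hWC : W = C ^ j := by rw [hWeq, he2, pow_zero, one_mul]
      -- transfer representation
      have : w = (C : ℤ) ^ j := by rw [hwW, hWC]; push_cast; ring
      rw [← this]
      exact hrep
    exact counting A C K p0 hA hC2 hp0 hp0A hp0C HrepC
lemma hasRep_of_geomLength_le (a x : ℤ) (k : ℕ) (h : geomLength a x ≤ k) :
    HasRep a x k := by
  have hne : {n : ℕ | ∃ l : List ℤ, l.length = n ∧
      (∀ z ∈ l, ∃ i : ℕ, z = a ^ i ∨ z = -a ^ i) ∧ l.sum = x}.Nonempty := by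
    obtain ⟨l, hl1, hl2, hl3⟩ := rep_of_int a x
    exact ⟨x.natAbs, l, hl1, hl2, hl3⟩
  obtain ⟨l, hl1, hl2, hl3⟩ := Nat.sInf_mem hne
  exact ⟨l, by rw [hl1]; exact h, hl2, hl3⟩

theorem stmt_13 (a b : ℤ) (ha : 1 < a) (hb : 1 < b)
    (hLip : ∃ K : ℝ, 1 ≤ K ∧ ∀ x y : ℤ,
      (1 / K) * geomDist a x y ≤ geomDist b x y ∧
      geomDist b x y ≤ K * geomDist a x y) :
    ∃ m n : ℕ, 0 < m ∧ 0 < n ∧ a ^ m = b ^ n := by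
  obtain ⟨K, hK1, hK⟩ := hLip
  have hK0 : (0 : ℝ) < K := by linarith
  set A : ℕ := a.toNat with hA
  set B : ℕ := b.toNat with hB
  have haA : a = (A : ℤ) := (Int.toNat_of_nonneg (by omega)).symm
  have hbB : b = (B : ℤ) := (Int.toNat_of_nonneg (by omega)).symm
  have hA2 : 2 ≤ A := by omega
  have hB2 : 2 ≤ B := by omega
  have H : ∀ j : ℕ, HasRep (A : ℤ) ((B : ℤ) ^ j) ⌊K⌋₊ := by
    intro j
    have h1 : geomLength b (b ^ j) ≤ 1 := by
      apply Nat.sInf_le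
      refine ⟨[b ^ j], by simp, ?_, by simp⟩
      intro z hz
      simp only [List.mem_singleton] at hz
      exact ⟨j, Or.inl hz⟩
    have h3 : geomDist b (b ^ j) 0 ≤ 1 := by
      unfold geomDist
      rw [sub_zero]
      exact_mod_cast h1
    have h2 := (hK (b ^ j) 0).1
    have h6 : K * ((1 / K) * geomDist a (b ^ j) 0) = geomDist a (b ^ j) 0 := by
      field_simp
    have h4 : geomDist a (b ^ j) 0 ≤ K := by
      have h7 := mul_le_mul_of_nonneg_left h2 hK0.le
      have h8 := mul_le_mul_of_nonneg_left h3 hK0.le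
      rw [h6] at h7
      linarith
    have h5 : geomLength a (b ^ j) ≤ ⌊K⌋₊ := by
      apply Nat.le_floor
      unfold geomDist at h4
      rw [sub_zero] at h4
      exact_mod_cast h4
    have := hasRep_of_geomLength_le a (b ^ j) ⌊K⌋₊ h5
    rw [haA, hbB] at this
    exact this
  obtain ⟨m, n, hm, hn, heq⟩ := main_nt A B ⌊K⌋₊ hA2 hB2 H
  refine ⟨m, n, hm, hn, ?_⟩
  rw [haA, hbB]
  exact_mod_cast heq
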